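/- Fix Ā ∈ ℝ^{3×3} and let H̃(A) = (1/2) |A − Ā|². If λ, μ ∈ ℝ^{3×3} satisfy |λ| > 3/2, then g_{H̃}(λ, μ) = +∞. -/
import Mathlib


open scoped BigOperators

noncomputable section

/-- `3 × 3` real matrices, as functions of (row, column). -/
abbrev M33 := Fin 3 → Fin 3 → ℝ

/-- The Levi-Civita symbol on indices in `Fin 3`. -/
def eps (i j k : Fin 3) : ℝ :=
  ((i.val : ℝ) - j.val) * ((j.val : ℝ) - k.val) * ((k.val : ℝ) - i.val) / 2

/-- The contraction `X : Y = Σ_{i,j} X_{ij} Y_{ij}`. -/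
def dotM (X Y : M33) : ℝ := ∑ i, ∑ j, X i j * Y i j

/-- `T(A)_{Zp} = ε_{pqr} ε_{ZBC} A_{Bq} A_{Cr}`. -/
def Tmap (A : M33) : M33 :=
  fun Z p => ∑ q, ∑ r, ∑ B, ∑ C, eps p q r * eps Z B C * A B q * A C r

/-- The Frobenius norm on `M33`. -/
def fnorm (A : M33) : ℝ := Real.sqrt (∑ i, ∑ j, (A i j) ^ 2)

/-- `g_H(λ, μ) = sup_{A} ( A:μ + λ:T(A) − H(A) )`, valued in `ℝ ∪ {±∞}` (the
supremum is never `-∞` since `H` is real-valued). -/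
def gH (H : M33 → ℝ) (lam mu : M33) : EReal :=
  ⨆ A : M33, ((dotM A mu + dotM lam (Tmap A) - H A : ℝ) : EReal)

lemma eps000 : eps 0 0 0 = 0 := by norm_num [eps]
lemma eps001 : eps 0 0 1 = 0 := by norm_num [eps]
lemma eps002 : eps 0 0 2 = 0 := by norm_num [eps]
lemma eps010 : eps 0 1 0 = 0 := by norm_num [eps]
lemma eps011 : eps 0 1 1 = 0 := by norm_num [eps]
lemma eps012 : eps 0 1 2 = 1 := by norm_num [eps]
lemma eps020 : eps 0 2 0 = 0 := by norm_num [eps]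
lemma eps021 : eps 0 2 1 = -1 := by norm_num [eps]
lemma eps022 : eps 0 2 2 = 0 := by norm_num [eps]
lemma eps100 : eps 1 0 0 = 0 := by norm_num [eps]
lemma eps101 : eps 1 0 1 = 0 := by norm_num [eps]
lemma eps102 : eps 1 0 2 = -1 := by norm_num [eps]
lemma eps110 : eps 1 1 0 = 0 := by norm_num [eps]
lemma eps111 : eps 1 1 1 = 0 := by norm_num [eps]
lemma eps112 : eps 1 1 2 = 0 := by norm_num [eps]
lemma eps120 : eps 1 2 0 = 1 := by norm_num [eps]
lemma eps121 : eps 1 2 1 = 0 := by norm_num [eps]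
lemma eps122 : eps 1 2 2 = 0 := by norm_num [eps]
lemma eps200 : eps 2 0 0 = 0 := by norm_num [eps]
lemma eps201 : eps 2 0 1 = 1 := by norm_num [eps]
lemma eps202 : eps 2 0 2 = 0 := by norm_num [eps]
lemma eps210 : eps 2 1 0 = -1 := by norm_num [eps]
lemma eps211 : eps 2 1 1 = 0 := by norm_num [eps]
lemma eps212 : eps 2 1 2 = 0 := by norm_num [eps]
lemma eps220 : eps 2 2 0 = 0 := by norm_num [eps]
lemma eps221 : eps 2 2 1 = 0 := by norm_num [eps]
lemma eps222 : eps 2 2 2 = 0 := by norm_num [eps]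

/-- `λ : T(A) = 2 λ : cof(A)`, expanded. -/
lemma Texp (lam A : M33) : dotM lam (Tmap A) = 2 * (
    lam 0 0 * (A 1 1 * A 2 2 - A 1 2 * A 2 1) +
    lam 0 1 * (A 1 2 * A 2 0 - A 1 0 * A 2 2) +
    lam 0 2 * (A 1 0 * A 2 1 - A 1 1 * A 2 0) +
    lam 1 0 * (A 2 1 * A 0 2 - A 2 2 * A 0 1) +
    lam 1 1 * (A 2 2 * A 0 0 - A 2 0 * A 0 2) +
    lam 1 2 * (A 2 0 * A 0 1 - A 2 1 * A 0 0) +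
    lam 2 0 * (A 0 1 * A 1 2 - A 0 2 * A 1 1) +
    lam 2 1 * (A 0 2 * A 1 0 - A 0 0 * A 1 2) +
    lam 2 2 * (A 0 0 * A 1 1 - A 0 1 * A 1 0)) := by
  simp only [dotM, Tmap, Fin.sum_univ_three, eps000,eps001,eps002,eps010,eps011,eps012,eps020,eps021,eps022,eps100,eps101,eps102,eps110,eps111,eps112,eps120,eps121,eps122,eps200,eps201,eps202,eps210,eps211,eps212,eps220,eps221,eps222]
  ring

/-- the test matrix: `1` at `(i+1, j+1)`, `s` at `(i+2, j+2)`. -/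
def A0 (i j : Fin 3) (s : ℝ) : M33 := fun Z p =>
  if Z = i+1 ∧ p = j+1 then 1 else if Z = i+2 ∧ p = j+2 then s else 0

lemma fin3cases (i : Fin 3) : i = 0 ∨ i = 1 ∨ i = 2 := by omega

lemma L1 (lam : M33) (i j : Fin 3) (s t : ℝ) :
    dotM lam (Tmap (fun Z p => t * A0 i j s Z p)) = 2 * s * t^2 * lam i j := by
  rw [Texp]
  rcases fin3cases i with rfl | rfl | rfl <;> rcases fin3cases j with rfl | rfl | rfl <;>
  · simp only [A0, Fin.reduceAdd, Fin.reduceEq, and_true, true_and, and_false, false_and,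
      and_self, reduceIte, ite_true, ite_false]
    ring

lemma sumsq_A0 (i j : Fin 3) (s : ℝ) :
    (∑ Z, ∑ p, (A0 i j s Z p)^2) = 1 + s^2 := by
  rcases fin3cases i with rfl | rfl | rfl <;> rcases fin3cases j with rfl | rfl | rfl <;>
  · simp only [A0, Fin.sum_univ_three, Fin.reduceAdd, Fin.reduceEq, and_true, true_and,
      and_false, false_and, and_self, reduceIte, ite_true, ite_false]
    ring

lemma fnorm_sq (A : M33) : fnorm A ^ 2 = ∑ i, ∑ j, (A i j) ^ 2 := by
  apply Real.sq_sqrt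
  exact Finset.sum_nonneg fun i _ => Finset.sum_nonneg fun j _ => sq_nonneg _

lemma big_entry (lam : M33) (h : 3/2 < fnorm lam) : ∃ i j, 1/2 < |lam i j| := by
  by_contra hc
  push_neg at hc
  have hb : ∑ i, ∑ j, (lam i j)^2 ≤ 9/4 := by
    have hsq : ∀ i j : Fin 3, (lam i j)^2 ≤ 1/4 := by
      intro i j
      have := hc i j
      nlinarith [abs_nonneg (lam i j), sq_abs (lam i j)]
    calc ∑ i, ∑ j, (lam i j)^2 ≤ ∑ _i : Fin 3, ∑ _j : Fin 3, (1/4 : ℝ) := by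
          apply Finset.sum_le_sum; intro i _
          apply Finset.sum_le_sum; intro j _; exact hsq i j
      _ = 9/4 := by norm_num [Fin.sum_univ_three]
  have hle : fnorm lam ≤ 3/2 := by
    rw [fnorm]
    calc Real.sqrt (∑ i, ∑ j, (lam i j)^2) ≤ Real.sqrt (9/4) := Real.sqrt_le_sqrt hb
      _ = 3/2 := by
          rw [show (9/4 : ℝ) = (3/2)^2 by norm_num, Real.sqrt_sq]; norm_num
  linarith

theorem stmt11 (Abar : M33) (lam mu : M33) (hlam : 3 / 2 < fnorm lam) :
    gH (fun A => (1 / 2) * fnorm (A - Abar) ^ 2) lam mu = ⊤ := by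
  obtain ⟨i, j, hij⟩ := big_entry lam hlam
  set s : ℝ := if 0 ≤ lam i j then 1 else -1 with hs
  have hs2 : s^2 = 1 := by rw [hs]; split <;> norm_num
  have hsl : s * lam i j = |lam i j| := by
    rw [hs]; split
    · simp [abs_of_nonneg ‹_›]
    · rw [abs_of_neg (lt_of_not_ge ‹¬ 0 ≤ lam i j›)]; ring
  rw [gH, iSup_eq_top]
  intro b hb
  set a : ℝ := 2 * |lam i j| - 1 with ha
  have hapos : 0 < a := by rw [ha]; linarith
  set bc : ℝ := dotM (A0 i j s) mu + ∑ Z, ∑ p, A0 i j s Z p * Abar Z p with hbc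
  set cc : ℝ := -(1/2) * ∑ Z, ∑ p, (Abar Z p)^2 with hcc
  have key : ∀ t : ℝ,
      dotM (fun Z p => t * A0 i j s Z p) mu
        + dotM lam (Tmap (fun Z p => t * A0 i j s Z p))
        - (1/2) * fnorm ((fun Z p => t * A0 i j s Z p) - Abar)^2
      = a * t^2 + bc * t + cc := by
    intro t
    rw [L1, fnorm_sq]
    have hsub : ∀ Z p : Fin 3, ((fun Z p => t * A0 i j s Z p) - Abar) Z p
        = t * A0 i j s Z p - Abar Z p := fun Z p => rfl
    simp only [hsub]
    have hexp : (∑ Z, ∑ p, (t * A0 i j s Z p - Abar Z p)^2)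
        = t^2 * (∑ Z, ∑ p, (A0 i j s Z p)^2)
          - 2*t*(∑ Z, ∑ p, A0 i j s Z p * Abar Z p) + ∑ Z, ∑ p, (Abar Z p)^2 := by
      simp only [Fin.sum_univ_three]
      ring
    rw [hexp, sumsq_A0, hs2]
    have hdot : dotM (fun Z p => t * A0 i j s Z p) mu = t * dotM (A0 i j s) mu := by
      simp only [dotM, Finset.mul_sum, Fin.sum_univ_three]
      ring
    rw [hdot, hbc, hcc, ha]
    have h2 : 2 * s * t^2 * lam i j = 2 * t^2 * |lam i j| := by
      rw [show 2 * s * t^2 * lam i j = 2 * t^2 * (s * lam i j) by ring, hsl]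
    rw [h2]; ring
  obtain ⟨M, hM, _⟩ := EReal.lt_iff_exists_real_btwn.mp hb
  set t : ℝ := (|M| + |bc| + |cc| + 1)/a + 1 with htdef
  have ht1 : 1 ≤ t := by
    have hnn : 0 ≤ (|M| + |bc| + |cc| + 1)/a := by positivity
    rw [htdef]; linarith
  have ht2 : |M| + |bc| + |cc| + 1 ≤ a * t := by
    rw [htdef, mul_add, mul_one, mul_div_cancel₀ _ (ne_of_gt hapos)]
    linarith
  have hval : M < a * t^2 + bc * t + cc := by
    nlinarith [le_abs_self M, neg_abs_le bc, neg_abs_le cc,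
      abs_nonneg M, abs_nonneg bc, abs_nonneg cc]
  refine ⟨fun Z p => t * A0 i j s Z p, ?_⟩
  calc b < (M : EReal) := hM
    _ < ((a * t^2 + bc * t + cc : ℝ) : EReal) := by exact_mod_cast hval
    _ = _ := by rw [key t]
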